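/- Let Γ be a generalized recursive atom ordering of a finite bounded poset P. Define a labeling λ with labels in ℕ as follows: for a maximal chain m of P containing a cover relation u ⋖ a, let r be the portion of m from 0̂ to u, and set λ(m,u,a) = i, where a is the i-th atom of [u,1̂]_r in the Γ-order. Then λ is a well-defined CE-labeling of P, λ is a CC-labeling of P, and λ has the unique earliest (UE) property (hence λ is self-consistent). -/

import Mathlib

/-- `l` is a saturated chain from `x` to `y` in the poset `α`:
a list `x = x₀ ⋖ x₁ ⋖ ⋯ ⋖ x_k = y` of elements, each covered by the next. -/
def SatChain {α : Type*} [PartialOrder α] (x y : α) (l : List α) : Prop :=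
  l.Chain' (· ⋖ ·) ∧ l.head? = some x ∧ l.getLast? = some y

/-- A chain-atom ordering of a bounded poset `α`: for each `u : α` and each root `r`
(a saturated chain from `⊥` to `u`, recorded as a list ending in `u`), a strict linear
order on the atoms of the rooted interval `[u, ⊤]_r`, i.e. on the elements covering `u`.
The relation is recorded for all pairs `(u, r)`; only genuine roots are relevant. -/
structure ChainAtomOrdering (α : Type*) [PartialOrder α] where
  lt : α → List α → α → α → Prop
  irrefl : ∀ u r a, ¬ lt u r a a
  trans : ∀ u r a b c, lt u r a b → lt u r b c → lt u r a c
  total : ∀ u r a b, u ⋖ a → u ⋖ b → a ≠ b → lt u r a b ∨ lt u r b a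

/-- `a` is the first atom of the rooted interval `[u,v]_r` in the chain-atom ordering `S`. -/
def ChainAtomOrdering.IsFirstAtom {α : Type*} [PartialOrder α] (S : ChainAtomOrdering α)
    (u v : α) (r : List α) (a : α) : Prop :=
  u ⋖ a ∧ a ≤ v ∧ ∀ b, u ⋖ b → b ≤ v → b ≠ a → S.lt u r a b

/-- `IsGRAO S u v r`: the restriction of the chain-atom ordering `S` to the rooted
interval `[u,v]_r` is a generalized recursive atom ordering (GRAO) of `[u,v]`.
Either `[u,v]` has length 1, or: (i)(a) for each atom `a` of `[u,v]_r` the restriction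
to `[a,v]_{r·a}` is a GRAO; (i)(b) for each atom `a` and each `a ⋖ x ⋖ w ≤ v`, either
the first atom of `[a,w]_{r·a}` lies above some atom of `[u,v]_r` earlier than `a`, or
no atom of `[a,w]_{r·a}` does; (ii) if atoms `ai, aj` of `[u,v]_r` with `ai` earlier
than `aj` lie below a common `y ≤ v`, then some `z` with `aj ⋖ z ≤ y` lies above an
atom of `[u,v]_r` earlier than `aj`. -/
inductive IsGRAO {α : Type*} [PartialOrder α] (S : ChainAtomOrdering α) :
    α → α → List α → Prop
  | base (u v : α) (r : List α) (h : u ⋖ v) : IsGRAO S u v r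
  | step (u v : α) (r : List α)
      (ia : ∀ a, u ⋖ a → a ≤ v → IsGRAO S a v (r ++ [a]))
      (ib : ∀ a x w, u ⋖ a → a ≤ v → a ⋖ x → x ⋖ w → w ≤ v →
        (∃ b, S.IsFirstAtom a w (r ++ [a]) b ∧
          ∃ a', u ⋖ a' ∧ a' ≤ v ∧ S.lt u r a' a ∧ a' < b) ∨
        (∀ b a', a ⋖ b → b ≤ w → u ⋖ a' → a' ≤ v → S.lt u r a' a → ¬ a' < b))
      (ii : ∀ ai aj y, u ⋖ ai → ai ≤ v → u ⋖ aj → aj ≤ v → S.lt u r ai aj →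
        ai < y → aj < y → y ≤ v →
        ∃ ak z, u ⋖ ak ∧ ak ≤ v ∧ S.lt u r ak aj ∧ aj ⋖ z ∧ z ≤ y ∧ ak < z) :
      IsGRAO S u v r

/-- `IsRAO S u v r`: the restriction of the chain-atom ordering `S` to the rooted
interval `[u,v]_r` is a recursive atom ordering (RAO) of `[u,v]`.  It differs from a
GRAO only in condition (i)(b): for each atom `a` of `[u,v]_r`, every atom of
`[a,v]_{r·a}` lying above some atom of `[u,v]_r` earlier than `a` must precede every
atom of `[a,v]_{r·a}` lying above no such atom. -/
inductive IsRAO {α : Type*} [PartialOrder α] (S : ChainAtomOrdering α) :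
    α → α → List α → Prop
  | base (u v : α) (r : List α) (h : u ⋖ v) : IsRAO S u v r
  | step (u v : α) (r : List α)
      (ia : ∀ a, u ⋖ a → a ≤ v → IsRAO S a v (r ++ [a]))
      (ib : ∀ a b c, u ⋖ a → a ≤ v → a ⋖ b → b ≤ v → a ⋖ c → c ≤ v →
        (∃ a', u ⋖ a' ∧ a' ≤ v ∧ S.lt u r a' a ∧ a' < b) →
        (∀ a', u ⋖ a' → a' ≤ v → S.lt u r a' a → ¬ a' < c) →
        S.lt a (r ++ [a]) b c)
      (ii : ∀ ai aj y, u ⋖ ai → ai ≤ v → u ⋖ aj → aj ≤ v → S.lt u r ai aj →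
        ai < y → aj < y → y ≤ v →
        ∃ ak z, u ⋖ ak ∧ ak ≤ v ∧ S.lt u r ak aj ∧ aj ⋖ z ∧ z ≤ y ∧ ak < z) :
      IsRAO S u v r

/-- The label sequence of a saturated chain, read from bottom to top.  Here
`lab r x y` is the label of the cover relation `x ⋖ y` with respect to the root `r`
(a saturated chain from `⊥` to `x` recorded as a list ending in `x`); this encodes a
chain-edge (CE-) labeling.  The first list argument is the root of the head of the
chain, the second is the chain itself. -/
def labelSeq {α Q : Type*} (lab : List α → α → α → Q) : List α → List α → List Q
  | _, [] => []
  | _, [_] => []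
  | r, x :: y :: c => lab r x y :: labelSeq lab (r ++ [y]) (y :: c)

/-- `u ⋖ v ⋖ w` is a topological ascent with respect to the root `r`: the label
sequence of `u ⋖ v ⋖ w` is lexicographically strictly smaller than that of every
other saturated chain from `u` to `w`. -/
def TopAscent {α Q : Type*} [PartialOrder α] [LinearOrder Q]
    (lab : List α → α → α → Q) (r : List α) (u v w : α) : Prop :=
  u ⋖ v ∧ v ⋖ w ∧ ∀ c, SatChain u w c → c ≠ [u, v, w] →
    List.Lex (· < ·) (labelSeq lab r [u, v, w]) (labelSeq lab r c)

/-- The saturated chain (second argument) is topologically ascending with respect to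
the root given as first argument: every consecutive triple on it is a topological
ascent (with respect to the appropriately extended root). -/
def TopAscending {α Q : Type*} [PartialOrder α] [LinearOrder Q]
    (lab : List α → α → α → Q) : List α → List α → Prop
  | r, u :: v :: w :: c => TopAscent lab r u v w ∧ TopAscending lab (r ++ [v]) (v :: w :: c)
  | _, _ => True

/-- `lab` is a CC-labeling: every rooted interval `[u,v]_r` has exactly one
topologically ascending saturated chain, distinct saturated chains of `[u,v]_r` have
distinct label sequences, and no label sequence is a prefix of another. -/
def IsCCLabeling {α Q : Type*} [PartialOrder α] [OrderBot α] [LinearOrder Q]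
    (lab : List α → α → α → Q) : Prop :=
  ∀ u v r, SatChain (⊥ : α) u r → u ≤ v →
    (∃! c, SatChain u v c ∧ TopAscending lab r c) ∧
    (∀ c c', SatChain u v c → SatChain u v c' → c ≠ c' →
      labelSeq lab r c ≠ labelSeq lab r c' ∧
      ¬ labelSeq lab r c <+: labelSeq lab r c')

/-- `lab` is a CL-labeling: every rooted interval `[u,v]_r` has exactly one saturated
chain with strictly increasing label sequence, and this label sequence is
lexicographically strictly smaller than that of every other saturated chain. -/
def IsCLLabeling {α Q : Type*} [PartialOrder α] [OrderBot α] [LinearOrder Q]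
    (lab : List α → α → α → Q) : Prop :=
  ∀ u v r, SatChain (⊥ : α) u r → u ≤ v →
    ∃ c, SatChain u v c ∧ List.Chain' (· < ·) (labelSeq lab r c) ∧
      (∀ c', SatChain u v c' → List.Chain' (· < ·) (labelSeq lab r c') → c' = c) ∧
      (∀ c', SatChain u v c' → c' ≠ c →
        List.Lex (· < ·) (labelSeq lab r c) (labelSeq lab r c'))

/-- `lab` is a topological CL-labeling: every rooted interval `[u,v]_r` has a unique
saturated chain with lexicographically smallest label sequence, and every other
saturated chain of `[u,v]_r` contains at least one topological descent (i.e. is not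
topologically ascending). -/
def IsTopolCLLabeling {α Q : Type*} [PartialOrder α] [OrderBot α] [LinearOrder Q]
    (lab : List α → α → α → Q) : Prop :=
  ∀ u v r, SatChain (⊥ : α) u r → u ≤ v →
    ∃ c, SatChain u v c ∧
      (∀ c', SatChain u v c' → c' ≠ c →
        List.Lex (· < ·) (labelSeq lab r c) (labelSeq lab r c')) ∧
      (∀ c', SatChain u v c' → c' ≠ c → ¬ TopAscending lab r c')

/-- `lab` has the unique earliest (UE) property: in each rooted interval `[u,v]_r`,
the smallest label on the cover relations upward from `u` occurs on only one such
cover relation. -/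
def HasUE {α Q : Type*} [PartialOrder α] [OrderBot α] [LinearOrder Q]
    (lab : List α → α → α → Q) : Prop :=
  ∀ u v r, SatChain (⊥ : α) u r → u ≤ v →
    ∀ a b, u ⋖ a → a ≤ v → u ⋖ b → b ≤ v →
      (∀ a', u ⋖ a' → a' ≤ v → lab r u a ≤ lab r u a') →
      (∀ a', u ⋖ a' → a' ≤ v → lab r u b ≤ lab r u a') → a = b

/-- `lab` is self-consistent: whenever `c₀` is the lexicographically strictly first
saturated chain of a rooted interval `[u,v]_r`, with `a` the atom on `c₀` and
`b ≠ a` another atom of `[u,v]_r`, then for every `v'` above both `a` and `b`, every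
saturated chain of `[u,v']_r` through `b` is lexicographically later than every
saturated chain of `[u,v']_r` through `a`. -/
def SelfConsistent {α Q : Type*} [PartialOrder α] [OrderBot α] [LinearOrder Q]
    (lab : List α → α → α → Q) : Prop :=
  ∀ u v r, SatChain (⊥ : α) u r → ∀ c₀, SatChain u v c₀ →
    (∀ c, SatChain u v c → c ≠ c₀ →
      List.Lex (· < ·) (labelSeq lab r c₀) (labelSeq lab r c)) →
    ∀ a, u ⋖ a → a ∈ c₀ →
    ∀ b, u ⋖ b → b ≤ v → b ≠ a →
    ∀ v', a ≤ v' → b ≤ v' →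
    ∀ ca cb, SatChain u v' ca → a ∈ ca → SatChain u v' cb → b ∈ cb →
      List.Lex (· < ·) (labelSeq lab r ca) (labelSeq lab r cb)

section Aux

variable {α : Type*} [PartialOrder α]

-- basic SatChain lemmas

lemma satChain_exists_cons {x y : α} {c : List α} (h : SatChain x y c) :
    ∃ t, c = x :: t := by
  obtain ⟨-, h2, -⟩ := h
  cases c with
  | nil => simp at h2
  | cons a t => simp at h2; exact ⟨t, by rw [h2]⟩

lemma satChain_singleton (x : α) : SatChain x x [x] :=
  ⟨List.isChain_singleton x, rfl, rfl⟩

lemma satChain_cons_cases {x y : α} {c : List α} (h : SatChain x y c) :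
    (c = [x] ∧ x = y) ∨ ∃ a t, x ⋖ a ∧ SatChain a y (a :: t) ∧ c = x :: a :: t := by
  obtain ⟨t, rfl⟩ := satChain_exists_cons h
  obtain ⟨h1, h2, h3⟩ := h
  cases t with
  | nil => left; refine ⟨rfl, ?_⟩; simpa using h3
  | cons a t =>
    right
    refine ⟨a, t, (List.isChain_cons_cons.mp h1).1, ⟨(List.isChain_cons_cons.mp h1).2, rfl, ?_⟩, rfl⟩
    simpa using h3

lemma satChain_cons_of {x a y : α} {c : List α} (hxa : x ⋖ a) (h : SatChain a y c) :
    SatChain x y (x :: c) := by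
  obtain ⟨t, rfl⟩ := satChain_exists_cons h
  obtain ⟨h1, h2, h3⟩ := h
  exact ⟨List.isChain_cons_cons.mpr ⟨hxa, h1⟩, rfl, by simpa using h3⟩

lemma satChain_le : ∀ {c : List α} {x y : α}, SatChain x y c → x ≤ y := by
  intro c
  induction c with
  | nil => intro x y h; obtain ⟨-, h2, -⟩ := h; simp at h2
  | cons a t ih =>
    intro x y h
    rcases satChain_cons_cases h with ⟨-, rfl⟩ | ⟨b, t', hxb, hb, heq⟩
    · exact le_rfl
    · cases heq; exact hxb.le.trans (ih hb)

lemma satChain_mem_le : ∀ {c : List α} {x y : α}, SatChain x y c → ∀ z ∈ c, x ≤ z ∧ z ≤ y := by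
  intro c
  induction c with
  | nil => intro x y h z hz; simp at hz
  | cons a t ih =>
    intro x y h z hz
    rcases satChain_cons_cases h with ⟨heq, rfl⟩ | ⟨b, t', hxb, hb, heq⟩
    · cases heq; simp at hz; subst hz; exact ⟨le_rfl, le_rfl⟩
    · cases heq
      rcases List.mem_cons.mp hz with rfl | hz'
      · exact ⟨le_rfl, satChain_le h⟩
      · obtain ⟨h1, h2⟩ := ih hb z hz'
        exact ⟨hxb.le.trans h1, h2⟩

lemma satChain_self_eq {x : α} {c : List α} (h : SatChain x x c) : c = [x] := by
  rcases satChain_cons_cases h with ⟨heq, -⟩ | ⟨b, t', hxb, hb, heq⟩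
  · exact heq
  · exact absurd (satChain_le hb) (not_le_of_gt hxb.lt)

lemma satChain_covby {x y : α} {c : List α} (hxy : x ⋖ y) (h : SatChain x y c) :
    c = [x, y] := by
  rcases satChain_cons_cases h with ⟨heq, rfl⟩ | ⟨b, t', hxb, hb, heq⟩
  · exact absurd rfl hxy.lt.ne
  · cases heq
    have hby : b ≤ y := satChain_le hb
    have : b = y := by
      rcases hby.lt_or_eq with h' | h'
      · exact absurd h' (hxy.2 hxb.lt)
      · exact h'
    subst this
    rw [satChain_self_eq hb]

variable [Fintype α]

lemma exists_covby_le {x y : α} (h : x < y) : ∃ z, x ⋖ z ∧ z ≤ y := by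
  classical
  have hne : ({z | x < z ∧ z ≤ y} : Set α).toFinite.toFinset.Nonempty := by
    refine ⟨y, ?_⟩; simp [h]
  obtain ⟨m, hm, hmin⟩ := Finset.exists_minimal hne
  simp only [Set.Finite.mem_toFinset, Set.mem_setOf_eq] at hm
  refine ⟨m, ⟨hm.1, fun z hz hzm => ?_⟩, hm.2⟩
  exact absurd (hmin (by simp [Set.Finite.mem_toFinset, hz, hzm.le.trans hm.2]) hzm.le) (not_le_of_gt hzm)

lemma ncard_icc_lt {u a v : α} (h : u < a) (hav : a ≤ v) :
    (Set.Icc a v).ncard < (Set.Icc u v).ncard := by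
  apply Set.ncard_lt_ncard _ (Set.toFinite _)
  constructor
  · intro z hz; exact ⟨h.le.trans hz.1, hz.2⟩
  · intro hsub
    have : u ∈ Set.Icc a v := hsub ⟨le_rfl, hav.trans' h.le⟩
    exact absurd this.1 (not_le_of_gt h)

lemma exists_satChain : ∀ (n : ℕ) {x y : α}, (Set.Icc x y).ncard ≤ n → x ≤ y →
    ∃ c, SatChain x y c := by
  intro n
  induction n with
  | zero =>
    intro x y hn hxy
    exfalso
    have : x ∈ Set.Icc x y := ⟨le_rfl, hxy⟩
    have := Set.ncard_pos (Set.toFinite _) |>.mpr ⟨x, this⟩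
    omega
  | succ n ih =>
    intro x y hn hxy
    rcases hxy.lt_or_eq with h | rfl
    · obtain ⟨z, hz, hzy⟩ := exists_covby_le h
      have : (Set.Icc z y).ncard ≤ n := by
        have := ncard_icc_lt hz.lt hzy
        omega
      obtain ⟨c, hc⟩ := ih this hzy
      exact ⟨x :: c, satChain_cons_of hz hc⟩
    · exact ⟨[x], satChain_singleton x⟩

lemma exists_satChain' {x y : α} (h : x ≤ y) : ∃ c, SatChain x y c :=
  exists_satChain (Set.Icc x y).ncard le_rfl h

-- least element under a chain-atom order

lemma exists_gaLt_min (S : ChainAtomOrdering α) (u : α) (r : List α) :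
    ∀ (n : ℕ) (T : Set α), T.ncard ≤ n → T.Nonempty → (∀ a ∈ T, u ⋖ a) →
      ∃ a ∈ T, ∀ b ∈ T, b ≠ a → S.lt u r a b := by
  intro n
  induction n with
  | zero =>
    intro T hn hne hcov
    exact absurd (Set.ncard_pos (Set.toFinite _) |>.mpr hne) (by omega)
  | succ n ih =>
    intro T hn hne hcov
    obtain ⟨x, hx⟩ := hne
    by_cases hT' : ({b ∈ T | S.lt u r b x} : Set α).Nonempty
    · have hsub : ({b ∈ T | S.lt u r b x} : Set α) ⊂ T := by
        constructor
        · intro z hz; exact hz.1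
        · intro hsub
          exact S.irrefl u r x (hsub hx).2
      have hcard : ({b ∈ T | S.lt u r b x} : Set α).ncard ≤ n := by
        have := Set.ncard_lt_ncard hsub (Set.toFinite _)
        omega
      obtain ⟨a, ha, hmin⟩ := ih _ hcard hT' (fun b hb => hcov b hb.1)
      refine ⟨a, ha.1, fun b hb hba => ?_⟩
      rcases S.total u r a b (hcov a ha.1) (hcov b hb) (Ne.symm hba) with h' | h'
      · exact h'
      · have hbx' : S.lt u r b x := S.trans _ _ _ _ _ h' ha.2
        exact absurd (S.trans _ _ _ _ _ (hmin b ⟨hb, hbx'⟩ hba) h') (S.irrefl u r a)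
    · refine ⟨x, hx, fun b hb hbx => ?_⟩
      rcases S.total u r x b (hcov x hx) (hcov b hb) (Ne.symm hbx) with h' | h'
      · exact h'
      · exact absurd ⟨hb, h'⟩ (fun hh => hT' ⟨b, hh⟩)

end Aux
section Aux2

variable {α : Type*} [PartialOrder α]

/-- The labeling induced by a chain-atom ordering. -/
noncomputable def myLab (Ga : ChainAtomOrdering α) : List α → α → α → ℕ :=
  fun r u a => Set.ncard {b | u ⋖ b ∧ Ga.lt u r b a} + 1

variable [Fintype α] {Ga : ChainAtomOrdering α}

lemma myLab_lt {u a b : α} {r : List α} (ha : u ⋖ a) (hab : Ga.lt u r a b) :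
    myLab Ga r u a < myLab Ga r u b := by
  have hsub : {c | u ⋖ c ∧ Ga.lt u r c a} ⊂ {c | u ⋖ c ∧ Ga.lt u r c b} := by
    constructor
    · rintro c ⟨h1, h2⟩; exact ⟨h1, Ga.trans _ _ _ _ _ h2 hab⟩
    · intro hsub
      exact Ga.irrefl u r a (hsub ⟨ha, hab⟩).2
  have := Set.ncard_lt_ncard hsub (Set.toFinite _)
  simpa [myLab] using this

lemma myLab_ne {u a b : α} {r : List α} (ha : u ⋖ a) (hb : u ⋖ b) (hne : a ≠ b) :
    myLab Ga r u a ≠ myLab Ga r u b := by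
  rcases Ga.total u r a b ha hb hne with h | h
  · exact (myLab_lt ha h).ne
  · exact (myLab_lt hb h).ne'

lemma lex_cons_inv {p q : ℕ} {s t : List ℕ} (h : List.Lex (· < ·) (p :: s) (q :: t)) :
    p < q ∨ (p = q ∧ List.Lex (· < ·) s t) := by
  cases h with
  | cons h => exact Or.inr ⟨rfl, h⟩
  | rel h => exact Or.inl h

-- GRAO helpers

lemma isGRAO_self (Ga : ChainAtomOrdering α) (w : α) (r : List α) : IsGRAO Ga w w r := by
  refine IsGRAO.step w w r ?_ ?_ ?_
  · intro a ha hle; exact absurd (ha.lt.trans_le hle) (lt_irrefl w)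
  · intro a x w' ha hle _ _ _; exact absurd (ha.lt.trans_le hle) (lt_irrefl w)
  · intro ai aj y h1 h2 _ _ _ _ _ _; exact absurd (h1.lt.trans_le h2) (lt_irrefl w)

lemma IsGRAO.atom' {Ga : ChainAtomOrdering α} {u t : α} {r : List α}
    (h : IsGRAO Ga u t r) {q : α} (hq : u ⋖ q) (hqt : q ≤ t) :
    IsGRAO Ga q t (r ++ [q]) := by
  cases h with
  | base u t r hc =>
    have : q = t := by
      rcases hqt.lt_or_eq with h' | h'
      · exact absurd h' (hc.2 hq.lt)
      · exact h'
    subst this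
    exact isGRAO_self Ga _ _
  | step u t r ia ib ii => exact ia q hq hqt

lemma grao_of_root_aux [OrderTop α] {Ga : ChainAtomOrdering α} :
    ∀ (s : List α) (p u : α) (pre : List α),
      IsGRAO Ga p ⊤ (pre ++ [p]) → SatChain p u (p :: s) →
      IsGRAO Ga u ⊤ (pre ++ p :: s) := by
  intro s
  induction s with
  | nil =>
    intro p u pre hG hc
    obtain ⟨-, -, h3⟩ := hc
    simp at h3
    subst h3
    exact hG
  | cons q s' ih =>
    intro p u pre hG hc
    rcases satChain_cons_cases hc with ⟨heq, rfl⟩ | ⟨b, t', hpb, hb, heq⟩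
    · simp at heq
    · injection heq with h1 h2
      injection h2 with h3 h4
      subst h3; subst h4
      have hq : IsGRAO Ga q ⊤ ((pre ++ [p]) ++ [q]) := hG.atom' hpb le_top
      have := ih q u (pre ++ [p]) hq hb
      simpa using this

lemma grao_of_root [OrderTop α] [OrderBot α] {Ga : ChainAtomOrdering α} {u : α} {r : List α}
    (h0 : IsGRAO Ga ⊥ ⊤ [⊥]) (hr : SatChain ⊥ u r) : IsGRAO Ga u ⊤ r := by
  obtain ⟨s, rfl⟩ := satChain_exists_cons hr
  have := grao_of_root_aux s ⊥ u [] h0 hr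
  simpa using this

lemma IsGRAO.restrict {Ga : ChainAtomOrdering α} :
    ∀ {u w : α} {r : List α}, IsGRAO Ga u w r → ∀ v, u ≤ v → v ≤ w → IsGRAO Ga u v r := by
  intro u w r h
  induction h with
  | base u w r hc =>
    intro v h1 h2
    rcases h1.lt_or_eq with h' | h'
    · rcases h2.lt_or_eq with h'' | h''
      · exact absurd h'' (hc.2 h')
      · subst h''; exact IsGRAO.base _ _ _ hc
    · subst h'; exact isGRAO_self Ga _ r
  | step u w r ia ib ii ih =>
    intro v h1 h2
    refine IsGRAO.step u v r ?_ ?_ ?_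
    · intro a ha hav
      exact ih a ha (hav.trans h2) v hav h2
    · intro a x w' ha hav hax hxw hw'v
      rcases ib a x w' ha (hav.trans h2) hax hxw (hw'v.trans h2) with
        ⟨b, hb, a', ha'1, ha'2, ha'3, ha'4⟩ | hright
      · exact Or.inl ⟨b, hb, a', ha'1, (ha'4.le.trans (hb.2.1.trans hw'v)), ha'3, ha'4⟩
      · exact Or.inr fun b a' hab hbw hua' ha'v hlt => hright b a' hab hbw hua' (ha'v.trans h2) hlt
    · intro ai aj y c1 c2 c3 c4 c5 c6 c7 c8
      obtain ⟨ak, z, k1, k2, k3, k4, k5, k6⟩ :=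
        ii ai aj y c1 (c2.trans h2) c3 (c4.trans h2) c5 c6 c7 (c8.trans h2)
      exact ⟨ak, z, k1, k6.le.trans (k5.trans c8), k3, k4, k5, k6⟩

/-- Key consequence of the GRAO axioms: if the atom `a` of `[u,v]` is preceded by some
atom `a0`, then the `Γ`-first atom of `[a,v]` lies above some atom earlier than `a`. -/
lemma crux {Ga : ChainAtomOrdering α} {u v r : _} {a a0 xs : α}
    (G : IsGRAO Ga u v r) (hua : u ⋖ a) (hav : a ≤ v) (hav' : a < v)
    (ha0 : u ⋖ a0) (ha0v : a0 ≤ v) (hlt0 : Ga.lt u r a0 a)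
    (hxs : Ga.IsFirstAtom a v (r ++ [a]) xs) :
    ∃ a', u ⋖ a' ∧ Ga.lt u r a' a ∧ a' < xs := by
  cases G with
  | base u v r hc => exact absurd hav' (hc.2 hua.lt)
  | step u v r ia ib ii =>
  -- a0 < v
  have ha0v' : a0 < v := by
    rcases ha0v.lt_or_eq with h' | h'
    · exact h'
    · subst h'
      exact absurd hav' (ha0.2 hua.lt)
  -- the set of "bad" atoms of [a,v]
  set B : Set α := {z | a ⋖ z ∧ z ≤ v ∧ ∃ a', u ⋖ a' ∧ a' ≤ v ∧ Ga.lt u r a' a ∧ a' < z} with hB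
  have hBne : B.Nonempty := by
    obtain ⟨ak, z, k1, k2, k3, k4, k5, k6⟩ := ii a0 a v ha0 ha0v hua hav hlt0 ha0v' hav' le_rfl
    exact ⟨z, k4, k5, ak, k1, k2, k3, k6⟩
  have hBcov : ∀ z ∈ B, a ⋖ z := fun z hz => hz.1
  obtain ⟨z, hzB, hzmin⟩ := exists_gaLt_min Ga a (r ++ [a]) B.ncard B le_rfl hBne hBcov
  obtain ⟨hz_cov, hz_le, aw, haw1, haw2, haw3, haw4⟩ := hzB
  by_cases hzxs : z = xs
  · subst hzxs; exact ⟨aw, haw1, haw3, haw4⟩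
  -- z ≠ xs, derive a contradiction
  exfalso
  have hlt_xz : Ga.lt a (r ++ [a]) xs z := hxs.2.2 z hz_cov hz_le hzxs
  have hzv : z < v := by
    rcases hz_le.lt_or_eq with h' | h'
    · exact h'
    · subst h'
      have : xs = z := by
        rcases hxs.2.1.lt_or_eq with h'' | h''
        · exact absurd h'' (hz_cov.2 hxs.1.lt)
        · exact h''
      exact absurd this.symm hzxs
  have hxsv : xs < v := by
    rcases hxs.2.1.lt_or_eq with h' | h'
    · exact h'
    · subst h'
      exact absurd hzv (hxs.1.2 hz_cov.lt)
  -- GRAO on [a,v]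
  have Gq : IsGRAO Ga a v (r ++ [a]) := ia a hua hav
  cases Gq with
  | base a v r' hc => exact absurd hzv (hc.2 hz_cov.lt)
  | step a v r' ia2 ib2 ii2 =>
  obtain ⟨ck, z2, m1, m2, m3, m4, m5, m6⟩ :=
    ii2 xs z v hxs.1 hxs.2.1 hz_cov hz_le hlt_xz hxsv hzv le_rfl
  rcases ib a z z2 hua hav hz_cov m4 m5 with ⟨b, hbfirst, a', n1, n2, n3, n4⟩ | hright
  · -- b is a bad atom earlier than z : contradiction with minimality of z
    have hbz : b ≠ z := by
      rintro rfl
      have hckb : ck ≠ b := by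
        rintro rfl
        exact Ga.irrefl a (r ++ [a]) ck m3
      exact Ga.irrefl a (r ++ [a]) b
        (Ga.trans _ _ _ _ _ (hbfirst.2.2 ck m1 m6.le hckb) m3)
    have hblt : Ga.lt a (r ++ [a]) b z := hbfirst.2.2 z hz_cov m4.le (Ne.symm hbz)
    have hbB : b ∈ B := ⟨hbfirst.1, hbfirst.2.1.trans m5, a', n1, n2, n3, n4⟩
    exact Ga.irrefl a (r ++ [a]) b (Ga.trans _ _ _ _ _ hblt (hzmin b hbB hbz))
  · exact hright z aw hz_cov m4.le haw1 haw2 haw3 haw4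

lemma satChain_cons_cons {x b y : α} {t : List α} (h : SatChain x y (x :: b :: t)) :
    x ⋖ b ∧ SatChain b y (b :: t) :=
  ⟨(List.isChain_cons_cons.mp h.1).1, (List.isChain_cons_cons.mp h.1).2, rfl, by simpa using h.2.2⟩

lemma satChain_second_of_mem {x y a : α} {c : List α} (h : SatChain x y c)
    (hcov : x ⋖ a) (hmem : a ∈ c) : ∃ t, c = x :: a :: t := by
  rcases satChain_cons_cases h with ⟨heq, rfl⟩ | ⟨b, t, hxb, htb, rfl⟩
  · rw [heq] at hmem
    simp at hmem
    exact absurd hmem hcov.lt.ne'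
  · rcases List.mem_cons.mp hmem with rfl | hm
    · exact absurd rfl hcov.lt.ne'
    · rcases List.mem_cons.mp hm with rfl | hm2
      · exact ⟨t, rfl⟩
      · by_cases hba' : b = a
        · subst hba'; exact ⟨t, rfl⟩
        · have hba : b ≤ a := (satChain_mem_le htb a (List.mem_cons_of_mem b hm2)).1
          exact absurd (lt_of_le_of_ne hba hba') (hcov.2 hxb.lt)

lemma lex_least_second {a v xs x : α} {r' : List α} {c0 : List α}
    (hc0 : SatChain a v c0)
    (hlex : ∀ c, SatChain a v c → c ≠ c0 →
      List.Lex (· < ·) (labelSeq (myLab Ga) r' c0) (labelSeq (myLab Ga) r' c))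
    (hxs : Ga.IsFirstAtom a v r' xs) {t : List α} (heq : c0 = a :: x :: t) : x = xs := by
  by_contra hne
  subst heq
  have hax : a ⋖ x := (satChain_cons_cons hc0).1
  have hxv : x ≤ v := (satChain_mem_le hc0 x (by simp)).2
  have hlt : Ga.lt a r' xs x := hxs.2.2 x hax hxv hne
  obtain ⟨cd, hcd⟩ := exists_satChain' hxs.2.1
  obtain ⟨t2, rfl⟩ := satChain_exists_cons hcd
  have hd : SatChain a v (a :: xs :: t2) := satChain_cons_of hxs.1 hcd
  have hdne : a :: xs :: t2 ≠ a :: x :: t := by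
    intro hh; injection hh with _ h2; injection h2 with h3 _; exact hne h3.symm
  have hLex := hlex _ hd hdne
  have hlab := myLab_lt hxs.1 hlt
  rcases lex_cons_inv hLex with h' | ⟨h', -⟩
  · omega
  · omega

lemma main_lemma :
    ∀ (n : ℕ) (u v : α) (r : List α), (Set.Icc u v).ncard ≤ n → u ≤ v → IsGRAO Ga u v r →
    ∃ c0, SatChain u v c0 ∧
      (∀ c, SatChain u v c → c ≠ c0 →
        List.Lex (· < ·) (labelSeq (myLab Ga) r c0) (labelSeq (myLab Ga) r c)) ∧
      TopAscending (myLab Ga) r c0 ∧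
      (∀ c, SatChain u v c → TopAscending (myLab Ga) r c → c = c0) := by
  intro n
  induction n with
  | zero =>
    intro u v r hn hle _
    exfalso
    have : 0 < (Set.Icc u v).ncard :=
      Set.ncard_pos (Set.toFinite _) |>.mpr ⟨u, ⟨le_rfl, hle⟩⟩
    omega
  | succ n ih =>
    intro u v r hn hle G
    rcases hle.lt_or_eq with hlt | rfl
    swap
    · refine ⟨[u], satChain_singleton u, ?_, trivial, ?_⟩
      · intro c hc hne; exact absurd (satChain_self_eq hc) hne
      · intro c hc _; exact satChain_self_eq hc
    -- u < v
    obtain ⟨z0, hz0, hz0v⟩ := exists_covby_le hlt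
    obtain ⟨a1, ha1T, ha1min⟩ := exists_gaLt_min Ga u r
      ({a | u ⋖ a ∧ a ≤ v} : Set α).ncard {a | u ⋖ a ∧ a ≤ v} le_rfl
      ⟨z0, hz0, hz0v⟩ (fun a ha => ha.1)
    have ha1 : Ga.IsFirstAtom u v r a1 :=
      ⟨ha1T.1, ha1T.2, fun b hb hbv hbne => ha1min b ⟨hb, hbv⟩ hbne⟩
    have hcard : ∀ a : α, u ⋖ a → a ≤ v → (Set.Icc a v).ncard ≤ n := by
      intro a ha hav
      have := ncard_icc_lt ha.lt hav
      omega
    obtain ⟨c1, hc1, hc1lex, hc1asc, hc1uniq⟩ :=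
      ih a1 v (r ++ [a1]) (hcard a1 ha1T.1 ha1T.2) ha1T.2 (G.atom' ha1T.1 ha1T.2)
    obtain ⟨t1, rfl⟩ := satChain_exists_cons hc1
    refine ⟨u :: a1 :: t1, satChain_cons_of ha1T.1 hc1, ?_, ?_, ?_⟩
    · -- lexicographically least
      intro c hc hne
      rcases satChain_cons_cases hc with ⟨-, heq2⟩ | ⟨a, t, hua, hta, rfl⟩
      · exact absurd heq2 hlt.ne
      · by_cases haa1 : a = a1
        · subst haa1
          have hne' : (a :: t : List α) ≠ a :: t1 := by intro hh; apply hne; rw [hh]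
          exact List.Lex.cons (hc1lex (a :: t) hta hne')
        · have hav : a ≤ v := satChain_le hta
          exact List.Lex.rel (myLab_lt ha1T.1 (ha1.2.2 a hua hav haa1))
    · -- topologically ascending
      cases t1 with
      | nil => trivial
      | cons x t2 =>
        refine ⟨⟨ha1T.1, (satChain_cons_cons hc1).1, ?_⟩, hc1asc⟩
        intro c hc hnec
        have hax : a1 ⋖ x := (satChain_cons_cons hc1).1
        rcases satChain_cons_cases hc with ⟨-, heq2⟩ | ⟨b, t', hub, htb, rfl⟩
        · exact absurd heq2 (ha1T.1.lt.trans hax.lt).ne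
        · by_cases hba1 : b = a1
          · subst hba1
            have h9 := satChain_covby hax htb
            exact absurd (by rw [h9]) hnec
          · have hxv : x ≤ v := (satChain_mem_le hc1 x (by simp)).2
            have hbv : b ≤ v := (satChain_le htb).trans hxv
            exact List.Lex.rel (myLab_lt ha1T.1 (ha1.2.2 b hub hbv hba1))
    · -- uniqueness of topologically ascending chain
      intro c hc hasc
      rcases satChain_cons_cases hc with ⟨-, heq2⟩ | ⟨a, t, hua, hta, rfl⟩
      · exact absurd heq2 hlt.ne
      · cases t with
        | nil =>
          have hav : a = v := by simpa using hta.2.2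
          subst hav
          have ha1v : a1 = a := by
            rcases ha1T.2.lt_or_eq with h' | h'
            · exact absurd h' (hua.2 ha1T.1.lt)
            · exact h'
          subst ha1v
          have h5 := satChain_self_eq hc1
          injection h5 with _ h6
          rw [h6]
        | cons x t2 =>
          have hax : a ⋖ x := (satChain_cons_cons hta).1
          have hasc1 : TopAscent (myLab Ga) r u a x := hasc.1
          have hasc2 : TopAscending (myLab Ga) (r ++ [a]) (a :: x :: t2) := hasc.2
          have hav : a ≤ v := satChain_le hta
          obtain ⟨c1', hc1', hlex', hasc', huniq'⟩ :=
            ih a v (r ++ [a]) (hcard a hua hav) hav (G.atom' hua hav)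
          have hteq : a :: x :: t2 = c1' := huniq' _ hta hasc2
          have haxv : x ≤ v := (satChain_mem_le hta x (by simp)).2
          have havlt : a < v := lt_of_lt_of_le hax.lt haxv
          obtain ⟨z1, hz1, hz1v⟩ := exists_covby_le havlt
          obtain ⟨xs, hxsT, hxsmin⟩ := exists_gaLt_min Ga a (r ++ [a])
            ({b | a ⋖ b ∧ b ≤ v} : Set α).ncard {b | a ⋖ b ∧ b ≤ v} le_rfl
            ⟨z1, hz1, hz1v⟩ (fun b hb => hb.1)
          have hxs : Ga.IsFirstAtom a v (r ++ [a]) xs :=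
            ⟨hxsT.1, hxsT.2, fun b hb hbv hbne => hxsmin b ⟨hb, hbv⟩ hbne⟩
          have hxxs : x = xs := lex_least_second hc1' hlex' hxs hteq.symm
          by_cases haa1 : a = a1
          · subst haa1
            have h7 : a :: t1 = c1' := huniq' _ hc1 hc1asc
            have h8 : a :: x :: t2 = a :: t1 := hteq.trans h7.symm
            rw [h8]
          · exfalso
            obtain ⟨a', ha'1, ha'2, ha'3⟩ :=
              crux G hua hav havlt ha1T.1 ha1T.2 (ha1.2.2 a hua hav haa1) hxs
            rw [← hxxs] at ha'3
            obtain ⟨ca', hca'⟩ := exists_satChain' ha'3.le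
            obtain ⟨t3, rfl⟩ := satChain_exists_cons hca'
            have hd : SatChain u x (u :: a' :: t3) := satChain_cons_of ha'1 hca'
            have hdne : (u :: a' :: t3 : List α) ≠ [u, a, x] := by
              intro hh; injection hh with _ hh2; injection hh2 with hh3 _
              exact (Ga.irrefl u r a) (hh3 ▸ ha'2)
            have hLex := hasc1.2.2 _ hd hdne
            have hlab : myLab Ga r u a' < myLab Ga r u a := myLab_lt ha'1 ha'2
            rcases lex_cons_inv hLex with h' | ⟨h', -⟩
            · omega
            · omega

lemma labelSeq_diff :
    ∀ (c : List α) {x y : α} (r : List α) (c' : List α),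
      SatChain x y c → SatChain x y c' → c ≠ c' →
      labelSeq (myLab Ga) r c ≠ labelSeq (myLab Ga) r c' ∧
      ¬ labelSeq (myLab Ga) r c <+: labelSeq (myLab Ga) r c' := by
  intro c
  induction c with
  | nil => intro x y r c' hc; obtain ⟨-, h2, -⟩ := hc; simp at h2
  | cons hd tl ih =>
    intro x y r c' hc hc' hne
    have hhd : hd = x := by have := hc.2.1; simpa using this
    subst hhd
    cases tl with
    | nil =>
      have hxy : hd = y := by simpa using hc.2.2
      subst hxy
      exact absurd (satChain_self_eq hc').symm hne
    | cons a t =>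
      have h1 := satChain_cons_cons hc
      obtain ⟨t0, rfl⟩ := satChain_exists_cons hc'
      cases t0 with
      | nil =>
        have : hd = y := by simpa using hc'.2.2
        subst this
        exact absurd (satChain_le h1.2) (not_le_of_gt h1.1.lt)
      | cons b t' =>
        have h2 := satChain_cons_cons hc'
        by_cases hab : a = b
        · subst hab
          have hne2 : (a :: t : List α) ≠ a :: t' := by
            intro hh; apply hne; rw [hh]
          obtain ⟨d1, d2⟩ := ih (r ++ [a]) _ h1.2 h2.2 hne2
          constructor
          · simp only [labelSeq]
            intro hh
            exact d1 (by injection hh)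
          · simp only [labelSeq]
            rw [List.cons_prefix_cons]
            rintro ⟨-, hpre⟩
            exact d2 hpre
        · have hlab : myLab Ga r hd a ≠ myLab Ga r hd b := myLab_ne h1.1 h2.1 hab
          constructor
          · simp only [labelSeq]
            intro hh
            exact hlab (by injection hh)
          · simp only [labelSeq]
            rw [List.cons_prefix_cons]
            rintro ⟨h', -⟩
            exact hlab h'

end Aux2

/-- From a GRAO `Γ` of a finite bounded poset, labeling the cover relation `u ⋖ a`
(with respect to a root `r` for `[u,⊤]`) by the position of `a` in the `Γ`-order on
the atoms of `[u,⊤]_r` (i.e. one more than the number of earlier atoms) yields a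
(well-defined, by construction) CE-labeling that is a CC-labeling with the unique
earliest (UE) property, and is self-consistent. -/
theorem stmt_16 {α : Type*} [PartialOrder α] [BoundedOrder α] [Fintype α]
    (Ga : ChainAtomOrdering α) (h : IsGRAO Ga ⊥ ⊤ [⊥]) :
    IsCCLabeling (fun r u a => Set.ncard {b | u ⋖ b ∧ Ga.lt u r b a} + 1) ∧
    HasUE (fun r u a => Set.ncard {b | u ⋖ b ∧ Ga.lt u r b a} + 1) ∧
    SelfConsistent (fun r u a => Set.ncard {b | u ⋖ b ∧ Ga.lt u r b a} + 1) := by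
  show IsCCLabeling (myLab Ga) ∧ HasUE (myLab Ga) ∧ SelfConsistent (myLab Ga)
  have key : ∀ (u v : α) (r : List α), SatChain ⊥ u r → u ≤ v → IsGRAO Ga u v r :=
    fun u v r hr hle => (grao_of_root h hr).restrict v hle le_top
  refine ⟨?_, ?_, ?_⟩
  · -- CC-labeling
    intro u v r hr hle
    obtain ⟨c0, hc0, hlex, hasc, huniq⟩ :=
      main_lemma (Set.Icc u v).ncard u v r le_rfl hle (key u v r hr hle)
    constructor
    · exact ⟨c0, ⟨hc0, hasc⟩, fun c hc => huniq c hc.1 hc.2⟩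
    · intro c c' hc hc' hne
      exact labelSeq_diff c r c' hc hc' hne
  · -- UE property
    intro u v r hr hle a b hcova hav hcovb hbv hmina hminb
    by_contra hne
    have h1 := hmina b hcovb hbv
    have h2 := hminb a hcova hav
    exact myLab_ne hcova hcovb hne (le_antisymm h1 h2)
  · -- self-consistency
    intro u v r hr c0 hc0 hlex a hcova hamem b hcovb hbv hba v' hav' hbv' ca cb hca hamemca hcb
      hbmemcb
    obtain ⟨t0, rfl⟩ := satChain_second_of_mem hc0 hcova hamem
    obtain ⟨cbv, hcbv⟩ := exists_satChain' hbv
    obtain ⟨tb, rfl⟩ := satChain_exists_cons hcbv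
    have hd : SatChain u v (u :: b :: tb) := satChain_cons_of hcovb hcbv
    have hdne : (u :: b :: tb : List α) ≠ u :: a :: t0 := by
      intro hh; injection hh with _ hh2; injection hh2 with hh3 _; exact hba hh3
    have hLex := hlex _ hd hdne
    have hlab : myLab Ga r u a < myLab Ga r u b := by
      rcases lex_cons_inv hLex with h' | ⟨h', -⟩
      · exact h'
      · exact absurd h' (myLab_ne hcova hcovb (Ne.symm hba))
    obtain ⟨ta, rfl⟩ := satChain_second_of_mem hca hcova hamemca
    obtain ⟨tb2, rfl⟩ := satChain_second_of_mem hcb hcovb hbmemcb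
    exact List.Lex.rel hlab
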